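/- Let Z = Z (the integers), and let 0 → Z → H → G → 1 be a central extension classified by a 2-cocycle c: G × G → Z. Assume that no nonzero integer multiple of c is a coboundary (i.e. n·c = df for f: G → Z implies n = 0) and that Hom(G, Z) = 0. Then Hom(H, Z) = 0. -/

import Mathlib

/-- If no nonzero integer multiple of the 2-cocycle `c : G × G → ℤ` is a coboundary and
`Hom(G, ℤ) = 0`, then `Hom(H, ℤ) = 0` for the central extension `H = ℤ × G` twisted
by `c`. -/
theorem stmt15 {G : Type*} [Group G] (c : G → G → ℤ)
    (hcoc : ∀ g g' g'' : G, c g g' + c (g * g') g'' = c g' g'' + c g (g' * g''))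
    (hnc : ∀ (n : ℤ) (f : G → ℤ), (∀ g g', n * c g g' = f g + f g' - f (g * g')) → n = 0)
    (hG : ∀ φ : G → ℤ, (∀ g g', φ (g * g') = φ g + φ g') → ∀ g, φ g = 0) :
    ∀ ψ : ℤ × G → ℤ,
      (∀ h h' : ℤ × G, ψ (h.1 + h'.1 + c h.2 h'.2, h.2 * h'.2) = ψ h + ψ h') →
      ∀ h, ψ h = 0 := by
  intro ψ hψ
  set k := c 1 1 with hk
  have hc1 : ∀ g : G, c 1 g = k := by
    intro g
    have := hcoc 1 1 g
    simp at this
    linarith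
  -- u is additive
  have hu : ∀ a b : ℤ, ψ (a + b - k, 1) = ψ (a - k, 1) + ψ (b - k, 1) := by
    intro a b
    have := hψ (a - k, 1) (b - k, 1)
    simp [hk.symm] at this
    have e : a - k + (b - k) + c 1 1 = a + b - k := by rw [← hk]; ring
    rw [e] at this
    simpa using this
  set u : ℤ → ℤ := fun a => ψ (a - k, 1) with hudef
  have hu' : ∀ a b : ℤ, u (a + b) = u a + u b := hu
  set φ := AddMonoidHom.mk' u hu' with hφ
  set n := u 1 with hn
  have hulin : ∀ a : ℤ, u a = a * n := by
    intro a
    have : φ a = φ (a • (1 : ℤ)) := by norm_num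
    rw [map_zsmul] at this
    simpa [smul_eq_mul, mul_comm, hφ, AddMonoidHom.mk'_apply] using this
  set f : G → ℤ := fun g => ψ (0, g) with hf
  have hψeq : ∀ (a : ℤ) (g : G), ψ (a, g) = a * n + f g := by
    intro a g
    have := hψ (a - k, 1) (0, g)
    simp only [hc1 g] at this
    have e : (((a - k, (1:G)) : ℤ × G).1 + ((0, g) : ℤ × G).1 + k,
        ((a - k, (1:G)) : ℤ × G).2 * ((0, g) : ℤ × G).2) = ((a, g) : ℤ × G) := by
      simp
    rw [e] at this
    rw [this]
    have : ψ (a - k, 1) = u a := rfl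
    rw [this, hulin]
  have hcob : ∀ g g' : G, n * c g g' = f g + f g' - f (g * g') := by
    intro g g'
    have := hψ (0, g) (0, g')
    simp only at this
    rw [show ((0:ℤ) + 0 + c g g') = c g g' by ring] at this
    rw [hψeq (c g g') (g * g'), hψeq 0 g, hψeq 0 g'] at this
    linarith
  have hn0 : n = 0 := hnc n f hcob
  have hfhom : ∀ g g', f (g * g') = f g + f g' := by
    intro g g'
    have := hcob g g'
    rw [hn0] at this
    linarith
  have hf0 : ∀ g, f g = 0 := hG f hfhom
  intro h
  rw [show h = (h.1, h.2) from rfl, hψeq, hn0, hf0]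
  ring
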